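/- Let G = (R ∪ B, E) be a bipartite graph with parts R and B. Construct G' by duplicating B into copies B1, B2, adding blue vertices x1, x2 and red vertices y1, y2, connecting each r ∈ R to the copy u1 ∈ B1 of u if ru ∈ E and to u2 ∈ B2 otherwise, connecting y1 to x1 and to some |B|−1 vertices of B2, and y2 to x2 and to the remaining vertices of B2 so that B2 ⊆ N(y1) ∪ N(y2). Then R has a subset of size ≤ k dominating B in G if and only if R' = R ∪ {y1,y2} has a subset of size ≤ k+2 dominating B' = B1 ∪ B2 ∪ {x1,x2} in G'. -/
import Mathlib


/-- Adjacency of the constructed bipartite graph `G'` in the uniform-degree RBDS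
reduction. Red side: `R ⊕ Bool` (`Sum.inr false = y₁`, `Sum.inr true = y₂`).
Blue side: `(B ⊕ B) ⊕ Bool` (`Sum.inl (Sum.inl u) = u₁ ∈ B₁`,
`Sum.inl (Sum.inr u) = u₂ ∈ B₂`, `Sum.inr false = x₁`, `Sum.inr true = x₂`).
`S` is the set of `|B|−1` vertices of `B₂` joined to `y₁`. -/
def rbdsAdj {R B : Type*} (E : R → B → Prop) (S : Finset B) :
    (R ⊕ Bool) → ((B ⊕ B) ⊕ Bool) → Prop
  | Sum.inl r, Sum.inl (Sum.inl u) => E r u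
  | Sum.inl r, Sum.inl (Sum.inr u) => ¬ E r u
  | Sum.inl _, Sum.inr _ => False
  | Sum.inr _, Sum.inl (Sum.inl _) => False
  | Sum.inr false, Sum.inl (Sum.inr u) => u ∈ S
  | Sum.inr true, Sum.inl (Sum.inr u) => u ∉ S
  | Sum.inr b, Sum.inr b' => b = b'

/-- The RBDS reduction is correct: `R` has a set of size ≤ k dominating `B` in `G`
iff the red side of `G'` has a set of size ≤ k+2 dominating the blue side of `G'`. -/
theorem stmt_8 {R B : Type*} [Fintype B] (E : R → B → Prop) (k : ℕ)
    (S : Finset B) (hS : S.card = Fintype.card B - 1) :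
    (∃ D : Finset R, D.card ≤ k ∧ ∀ b : B, ∃ r ∈ D, E r b) ↔
    (∃ D' : Finset (R ⊕ Bool), D'.card ≤ k + 2 ∧
      ∀ b' : (B ⊕ B) ⊕ Bool, ∃ r' ∈ D', rbdsAdj E S r' b') := by
  classical
  constructor
  · rintro ⟨D, hDk, hDdom⟩
    refine ⟨D.image Sum.inl ∪ ({Sum.inr false, Sum.inr true} : Finset (R ⊕ Bool)), ?_, ?_⟩
    · calc (D.image Sum.inl ∪ {Sum.inr false, Sum.inr true}).card
          ≤ (D.image Sum.inl).card + ({Sum.inr false, Sum.inr true} : Finset (R ⊕ Bool)).card :=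
            Finset.card_union_le _ _
        _ ≤ k + 2 := by
            have h1 : (D.image Sum.inl).card ≤ k := le_trans (Finset.card_image_le (f := (Sum.inl : R → R ⊕ Bool))) hDk
            have h2 : ({Sum.inr false, Sum.inr true} : Finset (R ⊕ Bool)).card ≤ 2 :=
              (Finset.card_insert_le _ _).trans (by simp)
            omega
    · rintro (((u | u) | b))
      · obtain ⟨r, hr, hE⟩ := hDdom u
        exact ⟨Sum.inl r, by simp [hr], hE⟩
      · by_cases hu : u ∈ S
        · exact ⟨Sum.inr false, by simp, hu⟩
        · exact ⟨Sum.inr true, by simp, hu⟩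
      · exact ⟨Sum.inr b, by cases b <;> simp, by cases b <;> simp [rbdsAdj]⟩
  · rintro ⟨D', hDk, hDdom⟩
    have hfalse : Sum.inr false ∈ D' := by
      obtain ⟨r', hr', hadj⟩ := hDdom (Sum.inr false)
      rcases r' with r | b
      · exact absurd hadj (by simp [rbdsAdj])
      · have : b = false := by
          cases b
          · rfl
          · exact absurd hadj (by simp [rbdsAdj])
        subst this; exact hr'
    have htrue : Sum.inr true ∈ D' := by
      obtain ⟨r', hr', hadj⟩ := hDdom (Sum.inr true)
      rcases r' with r | b
      · exact absurd hadj (by simp [rbdsAdj])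
      · have : b = true := by
          cases b
          · exact absurd hadj (by simp [rbdsAdj])
          · rfl
        subst this; exact hr'
    refine ⟨D'.preimage Sum.inl Sum.inl_injective.injOn, ?_, ?_⟩
    · have hsub : (D'.preimage Sum.inl Sum.inl_injective.injOn).image Sum.inl ∪
          {Sum.inr false, Sum.inr true} ⊆ D' := by
        intro x hx
        simp only [Finset.mem_union, Finset.mem_image, Finset.mem_preimage,
          Finset.mem_insert, Finset.mem_singleton] at hx
        rcases hx with ⟨r, hr, rfl⟩ | rfl | rfl
        · exact hr
        · exact hfalse
        · exact htrue
      have hcard : ((D'.preimage Sum.inl Sum.inl_injective.injOn).image Sum.inl ∪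
          {Sum.inr false, Sum.inr true}).card =
          (D'.preimage Sum.inl Sum.inl_injective.injOn).card + 2 := by
        rw [Finset.card_union_of_disjoint (by simp), Finset.card_image_of_injective _
          Sum.inl_injective]
        simp
      have := Finset.card_le_card hsub
      omega
    · intro b
      obtain ⟨r', hr', hadj⟩ := hDdom (Sum.inl (Sum.inl b))
      rcases r' with r | c
      · exact ⟨r, Finset.mem_preimage.mpr hr', hadj⟩
      · rcases c with _ | _ <;> exact absurd hadj (by simp [rbdsAdj])
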